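/- Let (εᵢ) be a sequence in (0, 1/4) with εᵢ → 0. For each i let uᵢ : [0,2] → [0,∞) be equal to εᵢ⁻¹ on [1/2, 1/2+εᵢ] ∪ [3/2−εᵢ, 3/2] and 0 elsewhere, and let xᵢ : [−1,2] → ℝ be the unique solution, absolutely continuous on [0,2], of the delay differential equation ẋᵢ(t) = xᵢ(t) xᵢ(t−1) uᵢ(t) for a.e. t ∈ [0,2], with xᵢ(t) = 1 for all t ∈ [−1,0]. Then for every t ∈ [0,2] \ {1/2, 3/2}, xᵢ(t) → x(t) as i → ∞, where x(t) = 1 for t ∈ [0,1/2), x(t) = e for t ∈ [1/2, 3/2), and x(t) = e² for t ∈ [3/2, 2]. -/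

import Mathlib

open Set Filter

section Aux
open MeasureTheory

/-- Flat step: if the integrand vanishes a.e. on `(p,q]`, the solution is constant there. -/
lemma flat_step (f X : ℝ → ℝ) {p q : ℝ} (hpq : p ≤ q) (hp0 : 0 ≤ p)
    (hIp : IntervalIntegrable f volume 0 p)
    (hfs : ∀ᵐ s, s ∈ Ioc p q → f s = 0)
    (hXeq : ∀ t ∈ Icc p q, X t = 1 + ∫ s in (0:ℝ)..t, f s) :
    IntervalIntegrable f volume 0 q ∧ ∀ t ∈ Icc p q, X t = X p := by
  have hIpq : IntervalIntegrable f volume p q := by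
    rw [intervalIntegrable_iff_integrableOn_Ioc_of_le hpq]
    exact (integrableOn_zero (μ := volume)).congr
      ((ae_restrict_iff' measurableSet_Ioc).2 (hfs.mono fun s hs h => (hs h).symm))
  refine ⟨hIp.trans hIpq, fun t ht => ?_⟩
  have hIpt : IntervalIntegrable f volume p t := hIpq.mono_set
    (by rw [uIcc_of_le ht.1, uIcc_of_le hpq]; exact Icc_subset_Icc le_rfl ht.2)
  have hsplit : (∫ s in (0:ℝ)..t, f s) = (∫ s in (0:ℝ)..p, f s) + ∫ s in p..t, f s :=
    (intervalIntegral.integral_add_adjacent_intervals hIp hIpt).symm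
  have hzero : (∫ s in p..t, f s) = 0 := by
    have : (∫ s in p..t, f s) = ∫ s in p..t, (0:ℝ) := by
      apply intervalIntegral.integral_congr_ae
      rw [uIoc_of_le ht.1]
      exact hfs.mono fun s hs h => hs (Ioc_subset_Ioc le_rfl ht.2 h)
    simpa using this
  rw [hXeq t ht, hsplit, hzero, add_zero, ← hXeq p ⟨le_rfl, hpq⟩]
lemma pulse_aux (E : ℝ) (hE : 0 < E) (f X : ℝ → ℝ) {p t q : ℝ} (hpt : p ≤ t) (htq : t ≤ q)
    (hp0 : 0 ≤ p)
    (hfs : ∀ s ∈ Icc p q, f s = X s * E⁻¹)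
    (hXeq : ∀ r ∈ Icc p q, X r = 1 + ∫ s in (0:ℝ)..r, f s)
    (hIp : IntervalIntegrable f volume 0 p)
    (hIt : IntervalIntegrable f volume 0 t) :
    ∀ r ∈ Icc p t, X r = X p * Real.exp ((r - p) / E) := by
  have h0t : (0:ℝ) ≤ t := hp0.trans hpt
  have hXcont : ContinuousOn X (Icc p t) := by
    have hint : IntegrableOn f (uIcc 0 t) volume := by
      rw [uIcc_of_le h0t, integrableOn_Icc_iff_integrableOn_Ioc]
      exact (intervalIntegrable_iff_integrableOn_Ioc_of_le h0t).1 hIt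
    have hprim : ContinuousOn (fun r => 1 + ∫ s in (0:ℝ)..r, f s) (uIcc 0 t) :=
      continuousOn_const.add (intervalIntegral.continuousOn_primitive_interval hint)
    refine (hprim.mono ?_).congr ?_
    · rw [uIcc_of_le h0t]; exact Icc_subset_Icc hp0 le_rfl
    · intro r hr; exact hXeq r ⟨hr.1, hr.2.trans htq⟩
  set c : ℝ → ℝ := fun r => X (max p (min r t)) with hc_def
  have hclamp : Continuous fun r : ℝ => max p (min r t) :=
    continuous_const.max (continuous_id.min continuous_const)
  have hmem : ∀ r : ℝ, max p (min r t) ∈ Icc p t :=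
    fun r => ⟨le_max_left _ _, max_le hpt (min_le_right r t)⟩
  have hc : Continuous c := hXcont.comp_continuous hclamp hmem
  have hceq : ∀ r ∈ Icc p t, c r = X r := by
    intro r hr
    simp only [hc_def, min_eq_left hr.2, max_eq_right hr.1]
  have hXid : ∀ r ∈ Icc p t, X r = X p + ∫ s in p..r, c s * E⁻¹ := by
    intro r hr
    have hIpr : IntervalIntegrable f volume p r := hIt.mono_set
      (by rw [uIcc_of_le hr.1, uIcc_of_le h0t]; exact Icc_subset_Icc hp0 hr.2)
    have hsplit : (∫ s in (0:ℝ)..r, f s) = (∫ s in (0:ℝ)..p, f s) + ∫ s in p..r, f s :=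
      (intervalIntegral.integral_add_adjacent_intervals hIp hIpr).symm
    have hcongr : (∫ s in p..r, f s) = ∫ s in p..r, c s * E⁻¹ := by
      apply intervalIntegral.integral_congr
      intro s hs
      rw [uIcc_of_le hr.1] at hs
      have hs' : s ∈ Icc p t := ⟨hs.1, hs.2.trans hr.2⟩
      show f s = c s * E⁻¹
      rw [hfs s ⟨hs'.1, hs'.2.trans htq⟩, hceq s hs']
    rw [hXeq r ⟨hr.1, hr.2.trans htq⟩, hsplit, hcongr, ← add_assoc,
      ← hXeq p ⟨le_rfl, hpt.trans htq⟩]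
  set G : ℝ → ℝ := fun r => ∫ s in p..r, c s * E⁻¹ with hG_def
  have hG : ∀ r, HasDerivAt G (c r * E⁻¹) r :=
    fun r => ((hc.mul continuous_const).integral_hasStrictDerivAt p r).hasDerivAt
  set H : ℝ → ℝ := fun r => (X p + G r) * Real.exp (-((r - p) / E)) with hH_def
  have hHderiv : ∀ r, HasDerivAt H
      ((c r * E⁻¹) * Real.exp (-((r - p) / E))
        + (X p + G r) * (Real.exp (-((r - p) / E)) * (-(1 / E)))) r := by
    intro r
    have hinner : HasDerivAt (fun r : ℝ => -((r - p) / E)) (-(1 / E)) r := by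
      exact (((hasDerivAt_id r).sub_const p).div_const E).neg
    have hexp : HasDerivAt (fun r : ℝ => Real.exp (-((r - p) / E)))
        (Real.exp (-((r - p) / E)) * (-(1 / E))) r :=
      (Real.hasDerivAt_exp _).comp r hinner
    exact ((hG r).const_add (X p)).mul hexp
  have hGcont : Continuous G := continuous_iff_continuousAt.2 fun r => (hG r).continuousAt
  have hHcont : Continuous H := by
    rw [hH_def]
    exact (continuous_const.add hGcont).mul
      (Real.continuous_exp.comp (((continuous_id.sub continuous_const).div_const E).neg))
  have hkey : ∀ y ∈ Icc p t, H y = X p := by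
    have := eq_of_has_deriv_right_eq (f := H) (g := fun _ => X p) (f' := fun _ => (0:ℝ))
      (a := p) (b := t) ?_ ?_ hHcont.continuousOn continuousOn_const ?_
    · exact this
    · intro r hr
      have h0 : (c r * E⁻¹) * Real.exp (-((r - p) / E))
          + (X p + G r) * (Real.exp (-((r - p) / E)) * (-(1 / E))) = 0 := by
        have hcr : c r = X p + G r := by
          rw [hceq r ⟨hr.1, hr.2.le⟩]
          exact hXid r ⟨hr.1, hr.2.le⟩
        rw [hcr, one_div]; ring
      have := hHderiv r
      rw [h0] at this
      exact this.hasDerivWithinAt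
    · intro r hr; exact (hasDerivAt_const r (X p)).hasDerivWithinAt
    · show H p = X p
      rw [hH_def]
      simp [hG_def]
  intro r hr
  have h1 : X r * Real.exp (-((r - p) / E)) = X p := by
    rw [hXid r hr]
    exact hkey r hr
  calc X r = (X r * Real.exp (-((r - p) / E))) * Real.exp ((r - p) / E) := by
        rw [mul_assoc, ← Real.exp_add]; simp
    _ = X p * Real.exp ((r - p) / E) := by rw [h1]
lemma pulse_step (E : ℝ) (hE : 0 < E) (f X : ℝ → ℝ) {p q : ℝ} (hpq : p < q) (hp0 : 0 ≤ p)
    (hIp : IntervalIntegrable f volume 0 p)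
    (hfs : ∀ s ∈ Icc p q, f s = X s * E⁻¹)
    (hXeq : ∀ r ∈ Icc p q, X r = 1 + ∫ s in (0:ℝ)..r, f s) :
    IntervalIntegrable f volume 0 q ∧
      ∀ t ∈ Icc p q, X t = X p * Real.exp ((t - p) / E) := by
  by_cases hPq : IntervalIntegrable f volume 0 q
  · exact ⟨hPq, pulse_aux E hE f X hpq.le le_rfl hp0 hfs hXeq hIp hPq⟩
  exfalso
  set S : Set ℝ := {t | t ∈ Icc p q ∧ IntervalIntegrable f volume 0 t} with hS_def
  have hpS : p ∈ S := ⟨⟨le_rfl, hpq.le⟩, hIp⟩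
  have hSne : S.Nonempty := ⟨p, hpS⟩
  have hSbdd : BddAbove S := ⟨q, fun t ht => ht.1.2⟩
  set T := sSup S with hT_def
  have hpT : p ≤ T := le_csSup hSbdd hpS
  have hTq : T ≤ q := csSup_le hSne fun t ht => ht.1.2
  have hval : ∀ r, p ≤ r → r < T → X r = X p * Real.exp ((r - p) / E) := by
    intro r hpr hrT
    obtain ⟨t', ht'S, hrt'⟩ := exists_lt_of_lt_csSup hSne hrT
    exact pulse_aux E hE f X ht'S.1.1 ht'S.1.2 hp0 hfs hXeq hIp ht'S.2 r ⟨hpr, hrt'.le⟩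
  have hne : ∀ᵐ s : ℝ, s ≠ T := by
    rw [ae_iff]
    have : {a : ℝ | ¬a ≠ T} = {T} := by ext a; simp
    rw [this]
    exact measure_singleton T
  have hIT : IntervalIntegrable f volume 0 T := by
    have h0T : (0:ℝ) ≤ T := hp0.trans hpT
    rw [intervalIntegrable_iff_integrableOn_Ioc_of_le h0T]
    have hsub : Ioc (0:ℝ) T ⊆ Ioc 0 p ∪ Ioc p T := by
      intro s hs
      by_cases h : s ≤ p
      · exact Or.inl ⟨hs.1, h⟩
      · exact Or.inr ⟨lt_of_not_ge h, hs.2⟩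
    refine IntegrableOn.mono_set ?_ hsub
    apply IntegrableOn.union
    · exact (intervalIntegrable_iff_integrableOn_Ioc_of_le hp0).1 hIp
    · have hg : IntegrableOn (fun s => X p * Real.exp ((s - p) / E) * E⁻¹) (Ioc p T) volume := by
        apply Continuous.integrableOn_Ioc
        exact ((continuous_const.mul (Real.continuous_exp.comp
          ((continuous_id.sub continuous_const).div_const E))).mul continuous_const)
      apply hg.congr
      filter_upwards [ae_restrict_mem measurableSet_Ioc, ae_restrict_of_ae hne] with s hs hsT
      have hsT' : s < T := lt_of_le_of_ne hs.2 hsT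
      rw [hfs s ⟨hs.1.le, hs.2.trans hTq⟩, hval s hs.1.le hsT']
  have hTS : T ∈ S := ⟨⟨hpT, hTq⟩, hIT⟩
  have hTlt : T < q := lt_of_le_of_ne hTq (fun h => hPq (h ▸ hIT))
  have hX1 : ∀ t ∈ Ioc T q, X t = 1 := by
    intro t ht
    have h0t : (0:ℝ) ≤ t := hp0.trans (hpT.trans ht.1.le)
    have hnot : ¬IntervalIntegrable f volume 0 t := by
      intro h
      exact absurd (le_csSup hSbdd (⟨⟨hpT.trans ht.1.le, ht.2⟩, h⟩ : t ∈ S)) (not_le.2 ht.1)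
    have : (∫ s in (0:ℝ)..t, f s) = 0 := by
      rw [intervalIntegral.integral_of_le h0t]
      apply integral_undef
      rw [intervalIntegrable_iff_integrableOn_Ioc_of_le h0t] at hnot
      exact hnot
    rw [hXeq t ⟨hpT.trans ht.1.le, ht.2⟩, this, add_zero]
  apply hPq
  have h0q : (0:ℝ) ≤ q := hp0.trans hpq.le
  rw [intervalIntegrable_iff_integrableOn_Ioc_of_le h0q]
  have hsub : Ioc (0:ℝ) q ⊆ Ioc 0 T ∪ Ioc T q := by
    intro s hs
    by_cases h : s ≤ T
    · exact Or.inl ⟨hs.1, h⟩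
    · exact Or.inr ⟨lt_of_not_ge h, hs.2⟩
  refine IntegrableOn.mono_set ?_ hsub
  apply IntegrableOn.union
  · exact (intervalIntegrable_iff_integrableOn_Ioc_of_le (hp0.trans hpT)).1 hIT
  · have hconst : IntegrableOn (fun _ : ℝ => E⁻¹) (Ioc T q) volume := by
      refine integrableOn_const ?_
      exact (measure_Ioc_lt_top).ne
    apply hconst.congr_fun ?_ measurableSet_Ioc
    intro s hs
    rw [hfs s ⟨hpT.trans hs.1.le, hs.2⟩, hX1 s hs, one_mul]
lemma ddesolve (E : ℝ) (hE : 0 < E) (hE4 : E < 1/4) (u X : ℝ → ℝ)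
    (hu : ∀ t, u t = if t ∈ Icc (1/2:ℝ) (1/2+E) ∪ Icc (3/2-E) (3/2:ℝ) then E⁻¹ else 0)
    (hist : ∀ t ∈ Icc (-1:ℝ) 0, X t = 1)
    (hsol : ∀ t ∈ Icc (0:ℝ) 2, X t = 1 + ∫ s in (0:ℝ)..t, X s * X (s-1) * u s) :
    (∀ t ∈ Icc (0:ℝ) (1/2), X t = 1) ∧
    (∀ t ∈ Icc (1/2+E) (3/2-E), X t = Real.exp 1) ∧
    (∀ t ∈ Icc (3/2:ℝ) 2, X t = Real.exp 2) := by
  set f : ℝ → ℝ := fun s => X s * X (s-1) * u s with hf_def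
  have hne : ∀ a : ℝ, ∀ᵐ s : ℝ, s ≠ a := by
    intro a
    rw [ae_iff]
    have : {s : ℝ | ¬s ≠ a} = {a} := by ext s; simp
    rw [this]
    exact measure_singleton a
  -- step 1 : X = 1 on [0, 1/2]
  have step1 := flat_step f X (p := 0) (q := 1/2) (by norm_num) le_rfl
    IntervalIntegrable.refl
    (by
      filter_upwards [hne (1/2)] with s hs hmem
      have hu0 : u s = 0 := by
        rw [hu]
        apply if_neg
        rintro (⟨h1, h2⟩ | ⟨h1, h2⟩)
        · rcases lt_or_eq_of_le hmem.2 with h | h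
          · linarith
          · exact hs h
        · linarith [hmem.2]
      simp only [hf_def, hu0, mul_zero])
    (fun r hr => hsol r ⟨hr.1, by linarith [hr.2]⟩)
  have hX0 : X 0 = 1 := by
    rw [hsol 0 (by norm_num)]
    simp
  have hx1 : ∀ t ∈ Icc (0:ℝ) (1/2), X t = 1 := fun t ht => (step1.2 t ht).trans hX0
  -- step 2 : first pulse on [1/2, 1/2+E]
  have step2 := pulse_step E hE f X (p := 1/2) (q := 1/2+E) (by linarith) (by norm_num)
    step1.1
    (by
      intro s hs
      have hu' : u s = E⁻¹ := by rw [hu, if_pos (Set.mem_union_left _ hs)]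
      have hh : X (s-1) = 1 := hist _ ⟨by linarith [hs.1], by linarith [hs.2]⟩
      simp only [hf_def, hu', hh, mul_one])
    (fun r hr => hsol r ⟨by linarith [hr.1], by linarith [hr.2]⟩)
  have hx2val : X (1/2+E) = Real.exp 1 := by
    have h := step2.2 (1/2+E) ⟨by linarith, le_rfl⟩
    rw [hx1 (1/2) ⟨by norm_num, le_rfl⟩, one_mul] at h
    have harg : (1/2 + E - 1/2) / E = 1 := by field_simp; ring
    rw [h, harg]
  -- step 3 : flat on [1/2+E, 3/2-E]
  have step3 := flat_step f X (p := 1/2+E) (q := 3/2-E) (by linarith) (by linarith)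
    step2.1
    (by
      filter_upwards [hne (3/2-E)] with s hs hmem
      have hu0 : u s = 0 := by
        rw [hu]
        apply if_neg
        rintro (⟨h1, h2⟩ | ⟨h1, h2⟩)
        · linarith [hmem.1]
        · rcases lt_or_eq_of_le hmem.2 with h | h
          · linarith
          · exact hs h
      simp only [hf_def, hu0, mul_zero])
    (fun r hr => hsol r ⟨by linarith [hr.1], by linarith [hr.2]⟩)
  have hx3 : ∀ t ∈ Icc (1/2+E) (3/2-E), X t = Real.exp 1 :=
    fun t ht => (step3.2 t ht).trans hx2val
  -- step 4 : second pulse on [3/2-E, 3/2]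
  have step4 := pulse_step E hE f X (p := 3/2-E) (q := 3/2) (by linarith) (by linarith)
    step3.1
    (by
      intro s hs
      have hu' : u s = E⁻¹ := by rw [hu, if_pos (Set.mem_union_right _ hs)]
      have hh : X (s-1) = 1 := hx1 _ ⟨by linarith [hs.1], by linarith [hs.2]⟩
      simp only [hf_def, hu', hh, mul_one])
    (fun r hr => hsol r ⟨by linarith [hr.1], by linarith [hr.2]⟩)
  have hx4val : X (3/2) = Real.exp 2 := by
    have h := step4.2 (3/2) ⟨by linarith, le_rfl⟩
    rw [hx3 (3/2-E) ⟨by linarith, le_rfl⟩] at h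
    have harg : (3/2 - (3/2 - E)) / E = 1 := by field_simp; ring
    rw [h, harg, ← Real.exp_add]
    norm_num
  -- step 5 : flat on [3/2, 2]
  have step5 := flat_step f X (p := 3/2) (q := 2) (by norm_num) (by norm_num)
    step4.1
    (by
      apply Filter.Eventually.of_forall
      intro s hs
      have hu0 : u s = 0 := by
        rw [hu]
        apply if_neg
        rintro (⟨h1, h2⟩ | ⟨h1, h2⟩)
        · linarith [hs.1]
        · linarith [hs.1]
      simp only [hf_def, hu0, mul_zero])
    (fun r hr => hsol r ⟨by linarith [hr.1], hr.2⟩)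
  exact ⟨hx1, hx3, fun t ht => (step5.2 t ht).trans hx4val⟩

end Aux

/-- Let `εᵢ ∈ (0,1/4)` with `εᵢ → 0`, let
`uᵢ = εᵢ⁻¹` on `[1/2, 1/2+εᵢ] ∪ [3/2−εᵢ, 3/2]` and `0` elsewhere, and let `xᵢ` be the
unique absolutely continuous solution on `[0,2]` of `ẋᵢ(t) = xᵢ(t)xᵢ(t−1)uᵢ(t)` with
`xᵢ ≡ 1` on `[−1,0]` (encoded by the integral equation). Then for every
`t ∈ [0,2] \ {1/2, 3/2}`, `xᵢ(t) → x(t)`, where `x = 1` on `[0,1/2)`, `x = e` on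
`[1/2,3/2)` and `x = e²` on `[3/2,2]`. -/
theorem stmt_16 (ε : ℕ → ℝ) (hε : ∀ i, ε i ∈ Ioo (0:ℝ) (1/4))
    (hε0 : Tendsto ε atTop (nhds 0))
    (u : ℕ → ℝ → ℝ)
    (hu : ∀ i t, u i t =
      if t ∈ Icc (1/2 : ℝ) (1/2 + ε i) ∪ Icc (3/2 - ε i) (3/2 : ℝ) then (ε i)⁻¹ else 0)
    (x : ℕ → ℝ → ℝ)
    (hist : ∀ i, ∀ t ∈ Icc (-1 : ℝ) 0, x i t = 1)
    (hsol : ∀ i, ∀ t ∈ Icc (0:ℝ) 2,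
      x i t = 1 + ∫ s in (0:ℝ)..t, x i s * x i (s - 1) * u i s) :
    ∀ t ∈ Icc (0:ℝ) 2 \ {1/2, 3/2},
      Tendsto (fun i => x i t) atTop
        (nhds (if t < 1/2 then 1 else if t < 3/2 then Real.exp 1 else Real.exp 2)) := by
  intro t ht
  obtain ⟨htI, htne⟩ := ht
  simp only [mem_insert_iff, mem_singleton_iff, not_or] at htne
  obtain ⟨hne1, hne2⟩ := htne
  have hsolve := fun i => ddesolve (ε i) (hε i).1 (hε i).2 (u i) (x i) (hu i) (hist i) (hsol i)
  by_cases h1 : t < 1/2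
  · rw [if_pos h1]
    exact Tendsto.congr (fun i => ((hsolve i).1 t ⟨htI.1, h1.le⟩).symm) tendsto_const_nhds
  by_cases h2 : t < 3/2
  · rw [if_neg h1, if_pos h2]
    have ht1 : 1/2 < t := lt_of_le_of_ne (not_lt.1 h1) (Ne.symm hne1)
    have hδ : (0:ℝ) < min (t - 1/2) (3/2 - t) := lt_min (by linarith) (by linarith)
    refine Tendsto.congr' ?_ tendsto_const_nhds
    filter_upwards [hε0.eventually (Iio_mem_nhds hδ)] with i hi
    rw [lt_min_iff] at hi
    exact ((hsolve i).2.1 t ⟨by linarith [hi.1], by linarith [hi.2]⟩).symm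
  · rw [if_neg h1, if_neg h2]
    exact Tendsto.congr
      (fun i => ((hsolve i).2.2 t ⟨not_lt.1 h2, htI.2⟩).symm) tendsto_const_nhds
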